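/- arXiv:2503.24054 — 2 statements merged into one kernel-verified Lean document; each statement's English description precedes it below -/
import Mathlib

section
/- Let p, q, s ∈ ℝ with p ≠ 0, let (a_n)_{n≥0} be a real sequence, and let (a_n^k) satisfy a_n^0 = a_n and a_n^k = (p·n+q)·a_n^{k−1} + s·(n+1)·a_{n+1}^{k−1} for n ≥ 0, k ≥ 1. Then the exponential generating function of the final sequence satisfies Ā(t) = exp(q t) · a( (s/p)·(exp(p t) − 1) ) as formal power series in ℝ⟦t⟧, where the right-hand side is the product of the formal exponential exp(qt) with the formal substitution of the zero-constant-term series (s/p)(exp(pt) − 1) into the ordinary generating function a of the initial sequence. -/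
open PowerSeries

/-- Formal substitution of the power series `f` into the power series `g`: the series
`g(f(t))`. For `f` with zero constant term (the case used here), the coefficient of `t^n`
in `g(f(t))` is `Σ_{k ≤ n} (coeff k g) · (coeff n (f^k))`. -/
noncomputable def substPS (f g : PowerSeries ℝ) : PowerSeries ℝ :=
  PowerSeries.mk fun n =>
    ∑ k ∈ Finset.range (n + 1), PowerSeries.coeff k g * PowerSeries.coeff n (f ^ k)


section EgfAux
open Finset

private def Gf (p : ℝ) (k : ℕ) (α : ℝ) (m : ℕ) : ℝ :=
  ∑ j ∈ Finset.range (m + 1), (m.choose j : ℝ) * (-1) ^ (m - j) * (α + j * p) ^ k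

private lemma Gf_zero (p α : ℝ) (m : ℕ) : Gf p 0 α m = if m = 0 then 1 else 0 := by
  have h : Gf p 0 α m = ((1 : ℝ) + (-1)) ^ m := by
    rw [add_pow, Gf]
    refine Finset.sum_congr rfl fun j _ => by ring
  rw [h]
  rcases eq_or_ne m 0 with h0 | h0 <;> simp [h0, zero_pow]

private lemma Gf_succ (p α : ℝ) (k m : ℕ) :
    Gf p (k + 1) α m = α * Gf p k α m + m * p * Gf p k (α + p) (m - 1) := by
  cases m with
  | zero => simp [Gf]; ring
  | succ m =>
    have hsplit : Gf p (k + 1) α (m + 1) =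
        α * Gf p k α (m + 1) +
          ∑ j ∈ Finset.range (m + 2),
            ((m + 1).choose j : ℝ) * (-1) ^ (m + 1 - j) * (j * p) * (α + j * p) ^ k := by
      rw [Gf, Gf, Finset.mul_sum, ← Finset.sum_add_distrib]
      refine Finset.sum_congr rfl fun j _ => by ring
    rw [hsplit]
    congr 1
    rw [Finset.sum_range_succ']
    simp only [Nat.cast_zero, zero_mul, mul_zero, zero_add, add_zero]
    rw [Gf, Finset.mul_sum]
    refine Finset.sum_congr rfl fun j hj => ?_
    have hc : ((m + 1).choose (j + 1) : ℝ) * (j + 1) = (m + 1) * (m.choose j : ℝ) := by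
      have := Nat.add_one_mul_choose_eq m j
      have : ((m + 1) * m.choose j : ℕ) = ((m + 1).choose (j + 1) * (j + 1) : ℕ) := this
      exact_mod_cast (congrArg (Nat.cast : ℕ → ℝ) this).symm
    have hsub : m + 1 - (j + 1) = m - j := by omega
    push_cast [hsub]
    have hbase : α + ((j : ℝ) + 1) * p = α + p + (j : ℝ) * p := by ring
    rw [hbase]
    linear_combination ((-1 : ℝ) ^ (m - j) * p * (α + p + (j : ℝ) * p) ^ k) * hc

private lemma Gf_vanish (p : ℝ) : ∀ k (α : ℝ) (m : ℕ), k < m → Gf p k α m = 0 := by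
  intro k
  induction k with
  | zero => intro α m hm; rw [Gf_zero]; simp [show m ≠ 0 by omega]
  | succ k ih =>
    intro α m hm
    rw [Gf_succ, ih α m (by omega), ih (α + p) (m - 1) (by omega)]
    ring

private lemma key (p q s : ℝ) (hp : p ≠ 0) (a₀ : ℕ → ℝ) (a : ℕ → ℕ → ℝ)
    (h0 : ∀ n, a n 0 = a₀ n)
    (hrec : ∀ n k, a n (k + 1) =
      (p * (n : ℝ) + q) * a n k + s * ((n : ℝ) + 1) * a (n + 1) k) :
    ∀ k n, a n k = ∑ m ∈ Finset.range (k + 1),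
      a₀ (n + m) * ((n + m).choose m : ℝ) * (s / p) ^ m * Gf p k (p * n + q) m := by
  intro k
  induction k with
  | zero => intro n; simp [Gf_zero, h0]
  | succ k ih =>
    intro n
    have hsplit : ∀ m ∈ Finset.range (k + 2),
        a₀ (n + m) * ((n + m).choose m : ℝ) * (s / p) ^ m * Gf p (k + 1) (p * n + q) m =
        (p * n + q) * (a₀ (n + m) * ((n + m).choose m : ℝ) * (s / p) ^ m * Gf p k (p * n + q) m)
        + a₀ (n + m) * ((n + m).choose m : ℝ) * (s / p) ^ m * (m * p) *
            Gf p k (p * n + q + p) (m - 1) := by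
      intro m _
      rw [Gf_succ]
      ring
    have e1 : ∑ m ∈ Finset.range (k + 2),
        (p * n + q) * (a₀ (n + m) * ((n + m).choose m : ℝ) * (s / p) ^ m * Gf p k (p * n + q) m)
        = (p * n + q) * ∑ m ∈ Finset.range (k + 1),
            a₀ (n + m) * ((n + m).choose m : ℝ) * (s / p) ^ m * Gf p k (p * n + q) m := by
      have hv : Gf p k (p * n + q) (k + 1) = 0 := Gf_vanish p k _ _ (by omega)
      rw [Finset.sum_range_succ, hv]
      simp only [mul_zero, add_zero]
      rw [← Finset.mul_sum]
    have e2 : ∑ m ∈ Finset.range (k + 2),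
        a₀ (n + m) * ((n + m).choose m : ℝ) * (s / p) ^ m * (m * p) *
          Gf p k (p * n + q + p) (m - 1)
        = s * ((n : ℝ) + 1) * ∑ m ∈ Finset.range (k + 1),
            a₀ (n + 1 + m) * ((n + 1 + m).choose m : ℝ) * (s / p) ^ m *
              Gf p k (p * ((n + 1 : ℕ) : ℝ) + q) m := by
      rw [Finset.sum_range_succ']
      simp only [Nat.cast_zero, zero_mul, mul_zero, add_zero, Nat.add_sub_cancel]
      rw [Finset.mul_sum]
      refine Finset.sum_congr rfl fun m hm => ?_
      have hc : ((n + 1 + m).choose (m + 1) : ℝ) * ((m : ℝ) + 1) =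
          ((n + 1 + m).choose m : ℝ) * ((n : ℝ) + 1) := by
        have h1 : (n + 1 + m).choose (m + 1) * (m + 1) = (n + 1 + m).choose m * (n + 1 + m - m) :=
          Nat.choose_succ_right_eq (n + 1 + m) m
        have h3 : n + 1 + m - m = n + 1 := by omega
        rw [h3] at h1
        exact_mod_cast (congrArg (Nat.cast : ℕ → ℝ) h1)
      have hsp : (s / p) ^ (m + 1) * p = s * (s / p) ^ m := by
        rw [pow_succ]
        field_simp
      have hn1 : n + (m + 1) = n + 1 + m := by omega
      rw [hn1]
      push_cast
      rw [show p * (n : ℝ) + q + p = p * ((n : ℝ) + 1) + q from by ring]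
      linear_combination (a₀ (n + 1 + m) * (s / p) ^ m * Gf p k (p * ((n : ℝ) + 1) + q) m * s) * hc
        + (a₀ (n + 1 + m) * ((n + 1 + m).choose (m + 1) : ℝ) * Gf p k (p * ((n : ℝ) + 1) + q) m
            * ((m : ℝ) + 1)) * hsp
    rw [hrec, ih n, ih (n + 1), Finset.sum_congr rfl hsplit, Finset.sum_add_distrib, e1, e2]

private lemma coeff_rescale_exp (c : ℝ) (k : ℕ) :
    PowerSeries.coeff k (rescale c (exp ℝ)) = c ^ k / k.factorial := by
  rw [coeff_rescale, coeff_exp]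
  simp [div_eq_mul_inv]

private lemma coeff_hpow (p : ℝ) (m k : ℕ) :
    PowerSeries.coeff k ((rescale p (exp ℝ) - 1) ^ m) = Gf p k 0 m / k.factorial := by
  have hterm : ∀ j : ℕ, (rescale p (exp ℝ)) ^ j * (-1 : PowerSeries ℝ) ^ (m - j) *
      ((m.choose j : ℕ) : PowerSeries ℝ) =
      PowerSeries.C ((-1) ^ (m - j) * (m.choose j : ℝ)) * rescale ((j : ℝ) * p) (exp ℝ) := by
    intro j
    have h1 : (rescale p (exp ℝ)) ^ j = rescale ((j : ℝ) * p) (exp ℝ) := by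
      rw [← map_pow, exp_pow_eq_rescale_exp, rescale_rescale]
    rw [h1]
    have h2 : ((-1 : PowerSeries ℝ)) ^ (m - j) * ((m.choose j : ℕ) : PowerSeries ℝ) =
        PowerSeries.C ((-1) ^ (m - j) * (m.choose j : ℝ)) := by
      rw [map_mul, map_pow, map_neg, map_one, map_natCast]
    rw [h1] at *
    rw [← h2]
    ring
  have hexp : (rescale p (exp ℝ) - 1) ^ m =
      ∑ j ∈ Finset.range (m + 1),
        PowerSeries.C ((-1) ^ (m - j) * (m.choose j : ℝ)) * rescale ((j : ℝ) * p) (exp ℝ) := by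
    rw [sub_eq_add_neg, add_pow]
    exact Finset.sum_congr rfl fun j _ => hterm j
  rw [hexp, map_sum, Gf, Finset.sum_div]
  refine Finset.sum_congr rfl fun j _ => ?_
  rw [coeff_C_mul, coeff_rescale_exp, zero_add]
  ring

private lemma add_pow_div_fact (x y : ℝ) (k : ℕ) :
    (x + y) ^ k / k.factorial =
      ∑ ij ∈ Finset.HasAntidiagonal.antidiagonal k, x ^ ij.1 / ij.1.factorial * (y ^ ij.2 / ij.2.factorial) := by
  rw [Finset.Nat.sum_antidiagonal_eq_sum_range_succ_mk, add_pow, Finset.sum_div]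
  refine Finset.sum_congr rfl fun i hi => ?_
  have hik : i ≤ k := by simp at hi; omega
  rw [Nat.cast_choose ℝ hik]
  have h1 : (i.factorial : ℝ) ≠ 0 := Nat.cast_ne_zero.mpr i.factorial_ne_zero
  have h2 : ((k - i).factorial : ℝ) ≠ 0 := Nat.cast_ne_zero.mpr (k - i).factorial_ne_zero
  have h3 : (k.factorial : ℝ) ≠ 0 := Nat.cast_ne_zero.mpr k.factorial_ne_zero
  field_simp

end EgfAux

/-- Theorem 2.13: if `a_n^k = (pn+q) a_n^{k-1} + s(n+1) a_{n+1}^{k-1}` with `p ≠ 0`,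
then the exponential generating function of the final sequence is
`exp(qt) · a((s/p)(exp(pt) - 1))`. -/
theorem egf_final_eq (p q s : ℝ) (hp : p ≠ 0) (a₀ : ℕ → ℝ) (a : ℕ → ℕ → ℝ)
    (h0 : ∀ n, a n 0 = a₀ n)
    (hrec : ∀ n k, a n (k + 1) =
      (p * (n : ℝ) + q) * a n k + s * ((n : ℝ) + 1) * a (n + 1) k) :
    PowerSeries.mk (fun k => a 0 k / k.factorial) =
      rescale q (exp ℝ) *
        substPS (PowerSeries.C (s / p) * (rescale p (exp ℝ) - 1))
          (PowerSeries.mk fun n => a₀ n) := by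
  ext k
  rw [coeff_mk, coeff_mul]
  -- coefficient of f^m
  have hfpow : ∀ m j : ℕ,
      PowerSeries.coeff j ((PowerSeries.C (s / p) * (rescale p (exp ℝ) - 1)) ^ m) =
      (s / p) ^ m * (Gf p j 0 m / j.factorial) := by
    intro m j
    rw [mul_pow, ← map_pow, coeff_C_mul, coeff_hpow]
  -- coefficient of substPS, extended to range (k+1)
  have hsub : ∀ ij ∈ Finset.HasAntidiagonal.antidiagonal k,
      PowerSeries.coeff ij.1 (rescale q (exp ℝ)) *
        PowerSeries.coeff ij.2
          (substPS (PowerSeries.C (s / p) * (rescale p (exp ℝ) - 1))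
            (PowerSeries.mk fun n => a₀ n)) =
      ∑ m ∈ Finset.range (k + 1),
        a₀ m * (s / p) ^ m * (q ^ ij.1 / ij.1.factorial) * (Gf p ij.2 0 m / ij.2.factorial) := by
    rintro ⟨i, j⟩ hij
    rw [Finset.HasAntidiagonal.mem_antidiagonal] at hij
    have hijk : i + j = k := hij
    simp only [substPS, coeff_mk, coeff_rescale_exp]
    rw [Finset.mul_sum]
    have e : ∑ m ∈ Finset.range (j + 1),
        q ^ i / i.factorial * (a₀ m *
          PowerSeries.coeff j ((PowerSeries.C (s / p) * (rescale p (exp ℝ) - 1)) ^ m)) =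
        ∑ m ∈ Finset.range (j + 1),
          a₀ m * (s / p) ^ m * (q ^ i / i.factorial) * (Gf p j 0 m / j.factorial) :=
      Finset.sum_congr rfl fun m _ => by rw [hfpow]; ring
    rw [e]
    refine Finset.sum_subset (Finset.range_subset_range.mpr (by omega)) fun m hm hm' => ?_
    rw [Finset.mem_range] at hm hm'
    rw [Gf_vanish p j 0 m (by omega)]
    ring
  rw [Finset.sum_congr rfl hsub, Finset.sum_comm]
  -- now expand LHS via key
  rw [key p q s hp a₀ a h0 hrec k 0]
  rw [Finset.sum_div]
  refine Finset.sum_congr rfl fun m hm => ?_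
  simp only [Nat.cast_zero, mul_zero, zero_add, Nat.choose_self, Nat.cast_one, mul_one]
  have expand : ∀ ij : ℕ × ℕ,
      a₀ m * (s / p) ^ m * (q ^ ij.1 / ij.1.factorial) * (Gf p ij.2 0 m / ij.2.factorial) =
      ∑ j ∈ Finset.range (m + 1), (m.choose j : ℝ) * (-1) ^ (m - j) *
        (a₀ m * (s / p) ^ m * (q ^ ij.1 / ij.1.factorial) *
          (((j : ℝ) * p) ^ ij.2 / ij.2.factorial)) := by
    intro ij
    rw [Gf]
    simp only [zero_add]
    rw [Finset.sum_div, Finset.mul_sum]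
    refine Finset.sum_congr rfl fun j _ => by ring
  rw [Finset.sum_congr rfl fun ij _ => expand ij, Finset.sum_comm, Gf, Finset.mul_sum,
    Finset.sum_div]
  refine Finset.sum_congr rfl fun j _ => ?_
  have e2 : ∑ ij ∈ Finset.HasAntidiagonal.antidiagonal k, (m.choose j : ℝ) * (-1) ^ (m - j) *
      (a₀ m * (s / p) ^ m * (q ^ ij.1 / ij.1.factorial) *
        (((j : ℝ) * p) ^ ij.2 / ij.2.factorial)) =
      (m.choose j : ℝ) * (-1) ^ (m - j) * (a₀ m * (s / p) ^ m) *
        ∑ ij ∈ Finset.HasAntidiagonal.antidiagonal k,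
          q ^ ij.1 / ij.1.factorial * (((j : ℝ) * p) ^ ij.2 / ij.2.factorial) := by
    rw [Finset.mul_sum]
    exact Finset.sum_congr rfl fun ij _ => by ring
  rw [e2, ← add_pow_div_fact]
  ring
end

section
/- Let p, q, s ∈ ℝ with p ≠ 0, let (a_n)_{n≥0} be a real sequence, and let (a_n^k) satisfy a_n^0 = a_n and a_n^k = ((p·n+q)/k)·a_n^{k−1} + (s/k)·a_{n+1}^{k−1} for n ≥ 0, k ≥ 1. Then the ordinary generating function of the final sequence satisfies ā(t) = exp(q t) · A( (s/p)·(exp(p t) − 1) ) as formal power series in ℝ⟦t⟧, where the right-hand side is the product of the formal exponential exp(qt) with the formal substitution of the zero-constant-term series (s/p)(exp(pt) − 1) into the exponential generating function A of the initial sequence. -/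
open PowerSeries

lemma coeff_substPS (f g : PowerSeries ℝ) (n : ℕ) :
    PowerSeries.coeff n (substPS f g) =
      ∑ k ∈ Finset.range (n + 1), PowerSeries.coeff k g * PowerSeries.coeff n (f ^ k) := by
  simp [substPS]

lemma pow_coeff_zero (f : PowerSeries ℝ) (hf : constantCoeff f = 0) {k i : ℕ} (hik : i < k) :
    PowerSeries.coeff i (f ^ k) = 0 := by
  have hdvd : (X : PowerSeries ℝ) ^ k ∣ f ^ k :=
    pow_dvd_pow_of_dvd (PowerSeries.X_dvd_iff.2 hf) k
  exact (PowerSeries.X_pow_dvd_iff.1 hdvd) i hik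

lemma chain_rule (f : PowerSeries ℝ) (hf : constantCoeff f = 0) (g : PowerSeries ℝ) :
    d⁄dX ℝ (substPS f g) = substPS f (d⁄dX ℝ g) * d⁄dX ℝ f := by
  ext m
  rw [PowerSeries.coeff_derivative, coeff_substPS, PowerSeries.coeff_mul]
  -- RHS
  have hRHS : ∑ x ∈ Finset.HasAntidiagonal.antidiagonal m,
      PowerSeries.coeff x.1 (substPS f (d⁄dX ℝ g)) * PowerSeries.coeff x.2 (d⁄dX ℝ f)
      = ∑ k ∈ Finset.range (m + 1), (PowerSeries.coeff (k + 1) g * (k + 1)) *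
          PowerSeries.coeff m (f ^ k * d⁄dX ℝ f) := by
    rw [Finset.Nat.sum_antidiagonal_eq_sum_range_succ_mk]
    have step1 : ∀ i ∈ Finset.range (m + 1),
        PowerSeries.coeff i (substPS f (d⁄dX ℝ g)) * PowerSeries.coeff (m - i) (d⁄dX ℝ f)
        = ∑ k ∈ Finset.range (m + 1), (PowerSeries.coeff (k+1) g * (k+1)) *
            (PowerSeries.coeff i (f ^ k) * PowerSeries.coeff (m - i) (d⁄dX ℝ f)) := by
      intro i hi
      rw [coeff_substPS, Finset.sum_mul]
      rw [Finset.sum_subset (Finset.range_subset_range.2 (show i + 1 ≤ m + 1 by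
        have := Finset.mem_range.mp hi; omega))]
      · apply Finset.sum_congr rfl
        intro k _
        rw [PowerSeries.coeff_derivative]
        ring
      · intro k _ hk
        rw [pow_coeff_zero f hf (Nat.lt_of_succ_le (le_of_not_gt (fun h =>
          hk (Finset.mem_range.2 h))))]
        ring
    rw [Finset.sum_congr rfl step1, Finset.sum_comm]
    apply Finset.sum_congr rfl
    intro k _
    rw [PowerSeries.coeff_mul, Finset.Nat.sum_antidiagonal_eq_sum_range_succ_mk, Finset.mul_sum]
  rw [hRHS, Finset.sum_mul]
  -- LHS
  rw [Finset.sum_range_succ']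
  have h0 : PowerSeries.coeff 0 g * PowerSeries.coeff (m + 1) (f ^ 0) * (m + 1) = 0 := by
    simp [PowerSeries.coeff_one]
  rw [h0, add_zero]
  apply Finset.sum_congr rfl
  intro k _
  have hd : PowerSeries.coeff (m + 1) (f ^ (k + 1)) * (m + 1)
      = PowerSeries.coeff m (d⁄dX ℝ (f ^ (k + 1))) := by
    rw [PowerSeries.coeff_derivative]
  rw [mul_assoc, hd, Derivation.leibniz_pow]
  have : ((k + 1 : ℕ) • f ^ (k + 1 - 1) • d⁄dX ℝ f) = ((k : ℝ) + 1) • (f ^ k * d⁄dX ℝ f) := by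
    rw [Nat.add_sub_cancel, smul_eq_mul, ← Nat.cast_smul_eq_nsmul ℝ]
    push_cast
    ring_nf
  rw [this, map_smul, smul_eq_mul]
  ring

lemma deriv_rescale_exp (c : ℝ) :
    d⁄dX ℝ (rescale c (exp ℝ)) = PowerSeries.C c * rescale c (exp ℝ) := by
  ext n
  rw [PowerSeries.coeff_derivative]
  simp only [coeff_rescale, PowerSeries.coeff_exp, PowerSeries.coeff_C_mul]
  have h1 : ((n + 1 : ℕ) : ℚ) ≠ 0 := by positivity
  have : (algebraMap ℚ ℝ) (1 / ((n+1) : ℕ).factorial) * ((n : ℝ) + 1)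
      = (algebraMap ℚ ℝ) (1 / (n : ℕ).factorial) := by
    rw [Nat.factorial_succ]
    push_cast
    field_simp
  rw [← this]
  ring

lemma constCoeff_rescale_exp (c : ℝ) : constantCoeff (rescale c (exp ℝ)) = 1 := by
  rw [← PowerSeries.coeff_zero_eq_constantCoeff_apply, coeff_rescale]
  simp [PowerSeries.coeff_exp]

/-- Theorem 2.15: if `a_n^k = ((pn+q)/k) a_n^{k-1} + (s/k) a_{n+1}^{k-1}` with `p ≠ 0`,
then the ordinary generating function of the final sequence is
`exp(qt) · A((s/p)(exp(pt) - 1))`. -/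
theorem ogf_final_eq (p q s : ℝ) (hp : p ≠ 0) (a₀ : ℕ → ℝ) (a : ℕ → ℕ → ℝ)
    (h0 : ∀ n, a n 0 = a₀ n)
    (hrec : ∀ n k, a n (k + 1) =
      (p * (n : ℝ) + q) / ((k : ℝ) + 1) * a n k + s / ((k : ℝ) + 1) * a (n + 1) k) :
    PowerSeries.mk (fun k => a 0 k) =
      rescale q (exp ℝ) *
        substPS (PowerSeries.C (s / p) * (rescale p (exp ℝ) - 1))
          (PowerSeries.mk fun n => a₀ n / n.factorial) := by
  set f : PowerSeries ℝ := PowerSeries.C (s / p) * (rescale p (exp ℝ) - 1) with hfdef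
  have hf0 : constantCoeff f = 0 := by
    simp [hfdef, constCoeff_rescale_exp]
  have hdf : d⁄dX ℝ f = PowerSeries.C s * rescale p (exp ℝ) := by
    rw [hfdef, Derivation.leibniz]
    simp only [map_sub, derivative_C, Derivation.map_one_eq_zero, sub_zero, smul_zero, add_zero,
      smul_eq_mul, deriv_rescale_exp, mul_zero]
    rw [← mul_assoc, ← map_mul]
    field_simp
  -- the family A n and F n
  set A : ℕ → PowerSeries ℝ := fun n => PowerSeries.mk (fun m => a₀ (n + m) / m.factorial)
    with hAdef
  have hdA : ∀ n, d⁄dX ℝ (A n) = A (n + 1) := by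
    intro n
    ext m
    rw [PowerSeries.coeff_derivative]
    simp only [hAdef, PowerSeries.coeff_mk]
    rw [Nat.factorial_succ]
    have : (n + (m + 1)) = (n + 1 + m) := by omega
    rw [this]
    have hm : ((m : ℝ) + 1) ≠ 0 := by positivity
    push_cast
    field_simp
  set F : ℕ → PowerSeries ℝ := fun n => rescale (p * n + q) (exp ℝ) * substPS f (A n) with hFdef
  have hdF : ∀ n, d⁄dX ℝ (F n) =
      PowerSeries.C (p * n + q) * F n + PowerSeries.C s * F (n + 1) := by
    intro n
    rw [hFdef]
    simp only []
    rw [Derivation.leibniz, chain_rule f hf0, hdA, deriv_rescale_exp, smul_eq_mul, smul_eq_mul,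
      hdf]
    have hE : rescale (p * n + q) (exp ℝ) * rescale p (exp ℝ)
        = rescale (p * (n + 1 : ℕ) + q) (exp ℝ) := by
      rw [PowerSeries.exp_mul_exp_eq_exp_add]
      congr 1
      push_cast
      ring
    calc rescale (p * ↑n + q) (exp ℝ) * (substPS f (A (n + 1)) * (PowerSeries.C s * rescale p (exp ℝ)))
          + substPS f (A n) * (PowerSeries.C (p * ↑n + q) * rescale (p * ↑n + q) (exp ℝ))
        = PowerSeries.C (p * ↑n + q) * (rescale (p * ↑n + q) (exp ℝ) * substPS f (A n))
          + PowerSeries.C s * ((rescale (p * ↑n + q) (exp ℝ) * rescale p (exp ℝ)) * substPS f (A (n + 1))) := by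
          ring
      _ = _ := by rw [hE]
  -- coefficient recurrence for F
  have hcrec : ∀ n m, PowerSeries.coeff (m + 1) (F n) * ((m : ℝ) + 1)
      = (p * n + q) * PowerSeries.coeff m (F n) + s * PowerSeries.coeff m (F (n + 1)) := by
    intro n m
    have := congrArg (PowerSeries.coeff m) (hdF n)
    rwa [PowerSeries.coeff_derivative, map_add, PowerSeries.coeff_C_mul,
      PowerSeries.coeff_C_mul] at this
  have hc0 : ∀ n, PowerSeries.coeff 0 (F n) = a₀ n := by
    intro n
    rw [hFdef]
    simp only []
    rw [PowerSeries.coeff_zero_eq_constantCoeff_apply, map_mul, constCoeff_rescale_exp, one_mul,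
      ← PowerSeries.coeff_zero_eq_constantCoeff_apply, coeff_substPS]
    simp [hAdef, PowerSeries.coeff_one]
  -- induction
  have hmain : ∀ m n, a n m = PowerSeries.coeff m (F n) := by
    intro m
    induction m with
    | zero => intro n; rw [h0, hc0]
    | succ m ih =>
      intro n
      have hm : ((m : ℝ) + 1) ≠ 0 := by positivity
      have h := hcrec n m
      have h2 : PowerSeries.coeff (m + 1) (F n)
          = ((p * n + q) * PowerSeries.coeff m (F n)
            + s * PowerSeries.coeff m (F (n + 1))) / ((m : ℝ) + 1) := by
        rw [← h]; field_simp
      rw [hrec, ih, ih, h2]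
      ring
  ext k
  rw [PowerSeries.coeff_mk, hmain k 0]
  have hF0 : F 0 = rescale q (exp ℝ) *
      substPS f (PowerSeries.mk fun n => a₀ n / n.factorial) := by
    have hA0 : A 0 = PowerSeries.mk fun n => a₀ n / n.factorial := by
      simp [hAdef]
    rw [hFdef]
    simp only [Nat.cast_zero, mul_zero, zero_add, hA0]
  rw [hF0]
end
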